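/- Let (X, 𝒜) be a measurable space, let u ∈ X, let a : X → [0, 1] be measurable, and let q₁, q₂ be probability measures on X with q₁ absolutely continuous with respect to q₂. Define, for i = 1, 2, Q_i(A) = ∫_A a(v) q_i(dv) + 1_A(u)(1 − ∫_X a(v) q_i(dv)). Then for every measurable set A ⊆ X, |Q₁(A) − Q₂(A)| ≤ 2 ∫_X | (dq₁/dq₂)(v) − 1 | q₂(dv). -/

import Mathlib

open MeasureTheory

/-- Total-variation-type bound for Metropolis–Hastings transition probabilities built
from two absolutely continuous proposal distributions `q₁ ≪ q₂`:
`|Q₁(A) − Q₂(A)| ≤ 2 ∫ |dq₁/dq₂ − 1| dq₂`. -/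
theorem mh_kernel_difference_bound
    {X : Type*} [MeasurableSpace X]
    (u : X) (a : X → ℝ) (ha : Measurable a) (ha01 : ∀ v, a v ∈ Set.Icc (0 : ℝ) 1)
    (q₁ q₂ : Measure X) [IsProbabilityMeasure q₁] [IsProbabilityMeasure q₂]
    (hac : q₁ ≪ q₂)
    (Q : Measure X → Set X → ℝ)
    (hQ : ∀ q A, Q q A = (∫ v in A, a v ∂q) +
      Set.indicator A (fun _ => 1 - ∫ v, a v ∂q) u) :
    ∀ A : Set X, MeasurableSet A →
      |Q q₁ A - Q q₂ A| ≤ 2 * ∫ v, |(q₁.rnDeriv q₂ v).toReal - 1| ∂q₂ := by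
  set f : X → ℝ := fun v => (q₁.rnDeriv q₂ v).toReal with hf_def
  have hf : Integrable f q₂ := Measure.integrable_toReal_rnDeriv
  have hfm : Measurable f := (Measure.measurable_rnDeriv q₁ q₂).ennreal_toReal
  have hf1 : Integrable (fun v => f v - 1) q₂ := hf.sub (integrable_const 1)
  have hf1abs : Integrable (fun v => |f v - 1|) q₂ := hf1.abs
  -- key estimate
  have key : ∀ B : Set X, MeasurableSet B →
      |(∫ v in B, a v ∂q₁) - ∫ v in B, a v ∂q₂| ≤ ∫ v, |f v - 1| ∂q₂ := by
    intro B hB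
    set g : X → ℝ := fun v => B.indicator a v with hg_def
    have hgm : Measurable g := ha.indicator hB
    have hgbd : ∀ v, ‖g v‖ ≤ 1 := by
      intro v
      simp only [hg_def, Set.indicator]
      split_ifs with h
      · rw [Real.norm_eq_abs, abs_le]
        exact ⟨le_trans (by norm_num) (ha01 v).1, (ha01 v).2⟩
      · simp
    have hg2 : Integrable g q₂ :=
      (integrable_const (1 : ℝ)).mono' hgm.aestronglyMeasurable
        (Filter.Eventually.of_forall hgbd)
    have hfg : Integrable (fun v => g v * f v) q₂ :=
      hf.bdd_mul hgm.aestronglyMeasurable (Filter.Eventually.of_forall hgbd)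
    have hgf1 : Integrable (fun v => g v * (f v - 1)) q₂ :=
      hf1.bdd_mul hgm.aestronglyMeasurable (Filter.Eventually.of_forall hgbd)
    have h1 : (∫ v in B, a v ∂q₁) = ∫ v, g v ∂q₁ := (integral_indicator hB).symm
    have h2 : (∫ v in B, a v ∂q₂) = ∫ v, g v ∂q₂ := (integral_indicator hB).symm
    have h3 : (∫ v, g v ∂q₁) = ∫ v, f v * g v ∂q₂ := by
      simpa [hf_def, smul_eq_mul] using (integral_rnDeriv_smul hac (f := g)).symm
    have h4 : (∫ v, f v * g v ∂q₂) - (∫ v, g v ∂q₂)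
        = ∫ v, g v * (f v - 1) ∂q₂ := by
      rw [← integral_sub (by simpa [mul_comm] using hfg) hg2]
      congr 1; ext v; ring
    rw [h1, h2, h3, h4]
    calc |∫ v, g v * (f v - 1) ∂q₂| ≤ ∫ v, |g v * (f v - 1)| ∂q₂ :=
          by simpa [Real.norm_eq_abs, abs_mul] using
            norm_integral_le_integral_norm (μ := q₂) (fun v => g v * (f v - 1))
      _ ≤ ∫ v, |f v - 1| ∂q₂ := by
          apply integral_mono hgf1.abs hf1abs
          intro v
          simp only [abs_mul]
          show |g v| * |f v - 1| ≤ |f v - 1|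
          calc |g v| * |f v - 1| ≤ 1 * |f v - 1| := by
                apply mul_le_mul_of_nonneg_right _ (abs_nonneg _)
                simpa [Real.norm_eq_abs] using hgbd v
            _ = |f v - 1| := one_mul _
  intro A hA
  have hIA := key A hA
  have hIU := key Set.univ MeasurableSet.univ
  simp only [Measure.restrict_univ] at hIU
  rw [hQ q₁ A, hQ q₂ A]
  have hind : Set.indicator A (fun _ => 1 - ∫ v, a v ∂q₁) u
      - Set.indicator A (fun _ => 1 - ∫ v, a v ∂q₂) u
      = Set.indicator A (fun _ => (∫ v, a v ∂q₂) - ∫ v, a v ∂q₁) u := by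
    simp only [Set.indicator]
    split_ifs <;> ring
  have habs2 : |Set.indicator A (fun _ => (∫ v, a v ∂q₂) - ∫ v, a v ∂q₁) u|
      ≤ ∫ v, |f v - 1| ∂q₂ := by
    simp only [Set.indicator]
    split_ifs
    · rw [abs_sub_comm]; exact hIU
    · simpa using integral_nonneg fun v => abs_nonneg _
  calc |((∫ v in A, a v ∂q₁) + Set.indicator A (fun _ => 1 - ∫ v, a v ∂q₁) u)
        - ((∫ v in A, a v ∂q₂) + Set.indicator A (fun _ => 1 - ∫ v, a v ∂q₂) u)|
      = |((∫ v in A, a v ∂q₁) - ∫ v in A, a v ∂q₂)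
        + Set.indicator A (fun _ => (∫ v, a v ∂q₂) - ∫ v, a v ∂q₁) u| := by
        rw [← hind]; ring_nf
    _ ≤ |(∫ v in A, a v ∂q₁) - ∫ v in A, a v ∂q₂|
        + |Set.indicator A (fun _ => (∫ v, a v ∂q₂) - ∫ v, a v ∂q₁) u| :=
        abs_add_le _ _
    _ ≤ (∫ v, |f v - 1| ∂q₂) + ∫ v, |f v - 1| ∂q₂ := add_le_add hIA habs2
    _ = 2 * ∫ v, |f v - 1| ∂q₂ := by ring
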